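/- Let T be a finite tree with vertex set V and edge set E, and let 0 < t ≤ 1/4 be a real number. Then the family indexed by functions x : E → ℕ with terms ∏_{v ∈ V} Cat_{X_v(x)} · t^{X_v(x)}, where X_v(x) = ∑_{e ∈ E, v ∈ e} x(e), is summable; moreover its sum is at most (∑_{n≥0} Cat_n t^n)^{|V|}. -/

import Mathlib

open SimpleGraph

/-! ### Auxiliary lemmas: Catalan number bounds -/

lemma cb_sq_aux (n : ℕ) : (Nat.centralBinom n)^2 * (n+1) ≤ 16^n := by
  induction n with
  | zero => simp [Nat.centralBinom]
  | succ n ih =>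
    have key := Nat.succ_mul_centralBinom_succ n
    have hpos : 0 < (n+1)^3 := by positivity
    refine Nat.le_of_mul_le_mul_right ?_ hpos
    calc (Nat.centralBinom (n+1))^2 * (n+1+1) * (n+1)^3
        = ((n+1) * Nat.centralBinom (n+1))^2 * ((n+2)*(n+1)) := by ring
      _ = (2*(2*n+1)*Nat.centralBinom n)^2 * ((n+2)*(n+1)) := by rw [key]
      _ = (4*(2*n+1)^2*(n+2)) * ((Nat.centralBinom n)^2 * (n+1)) := by ring
      _ ≤ (4*(2*n+1)^2*(n+2)) * 16^n := Nat.mul_le_mul_left _ ih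
      _ ≤ (16*(n+1)^3) * 16^n := Nat.mul_le_mul_right _ (by nlinarith)
      _ = 16^(n+1) * (n+1)^3 := by ring

lemma catalan_quarter_le_aux (n : ℕ) : (catalan n : ℝ) * (1/4)^n ≤ 1/((n:ℝ)+1)^((3:ℝ)/2) := by
  have hcb : ((n+1) * catalan n)^2 * (n+1) ≤ 16^n := by
    rw [succ_mul_catalan_eq_centralBinom]; exact cb_sq_aux n
  have h1 : ((catalan n : ℝ))^2 * ((n:ℝ)+1)^3 ≤ 16^n := by
    have := (Nat.cast_le (α := ℝ)).2 hcb
    push_cast at this; nlinarith [this]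
  have ha : (0:ℝ) ≤ (catalan n : ℝ) * (1/4)^n := by positivity
  have hb : (0:ℝ) ≤ 1/((n:ℝ)+1)^((3:ℝ)/2) := by positivity
  have hb2 : (1/((n:ℝ)+1)^((3:ℝ)/2))^2 = 1/((n:ℝ)+1)^3 := by
    rw [div_pow, one_pow, ← Real.rpow_natCast (((n:ℝ)+1)^((3:ℝ)/2)) 2,
      ← Real.rpow_mul (by positivity)]
    norm_num
  have hsq : ((catalan n : ℝ) * (1/4)^n)^2 ≤ (1/((n:ℝ)+1)^((3:ℝ)/2))^2 := by
    rw [hb2, mul_pow, le_div_iff₀ (by positivity)]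
    calc (catalan n : ℝ)^2 * ((1/4:ℝ)^n)^2 * ((n:ℝ)+1)^3
        = ((catalan n : ℝ)^2 * ((n:ℝ)+1)^3) * ((1/4)^n)^2 := by ring
      _ = ((catalan n : ℝ)^2 * ((n:ℝ)+1)^3) * (1/16)^n := by
          rw [← pow_mul, show (1/16:ℝ) = (1/4)^2 by norm_num, ← pow_mul, Nat.mul_comm]
      _ ≤ 16^n * (1/16)^n := by
          apply mul_le_mul_of_nonneg_right h1 (by positivity)
      _ = 1 := by rw [← mul_pow]; norm_num
  calc (catalan n : ℝ) * (1/4)^n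
      = Real.sqrt (((catalan n : ℝ) * (1/4)^n)^2) := (Real.sqrt_sq ha).symm
    _ ≤ Real.sqrt ((1/((n:ℝ)+1)^((3:ℝ)/2))^2) := Real.sqrt_le_sqrt hsq
    _ = 1/((n:ℝ)+1)^((3:ℝ)/2) := Real.sqrt_sq hb

lemma summable_catalan_aux {t : ℝ} (ht0 : 0 < t) (ht : t ≤ 1/4) :
    Summable (fun n => (catalan n : ℝ) * t^n) := by
  have hB : Summable (fun n : ℕ => 1/((n:ℝ)+1)^((3:ℝ)/2)) := by
    have h := Real.summable_one_div_nat_rpow.mpr (show (1:ℝ) < 3/2 by norm_num)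
    have h2 := (summable_nat_add_iff 1).2 h
    apply h2.congr
    intro n; push_cast; ring_nf
  refine Summable.of_nonneg_of_le (fun n => by positivity) (fun n => ?_) hB
  calc (catalan n : ℝ) * t^n ≤ (catalan n : ℝ) * (1/4)^n := by
        apply mul_le_mul_of_nonneg_left (pow_le_pow_left₀ ht0.le ht n) (by positivity)
    _ ≤ 1/((n:ℝ)+1)^((3:ℝ)/2) := catalan_quarter_le_aux n

/-! ### Auxiliary lemmas: trees -/

section Tree

variable {V : Type*} [DecidableEq V] {G : SimpleGraph V}

lemma path_length_eq_dist_aux (hT : G.IsTree) {r v : V} (p : G.Walk r v) (hp : p.IsPath) :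
    p.length = G.dist r v := by
  refine le_antisymm ?_ (SimpleGraph.dist_le p)
  obtain ⟨w, hw⟩ := (hT.isConnected r v).exists_walk_length_eq_dist
  have hbp : w.bypass.IsPath := SimpleGraph.Walk.bypass_isPath w
  obtain ⟨P, hP, huniq⟩ := hT.existsUnique_path r v
  rw [huniq p hp, ← huniq w.bypass hbp, ← hw]
  exact SimpleGraph.Walk.length_bypass_le w

lemma tree_concat_aux (hT : G.IsTree) {r v u : V} (p0 : G.Walk r v) (hp0 : p0.IsPath)
    (hu : G.Adj u v) (hd : G.dist r u ≤ G.dist r v) :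
    ∃ q : G.Walk r u, p0 = q.concat hu := by
  by_cases hmem : u ∈ p0.support
  · refine ⟨p0.takeUntil u hmem, ?_⟩
    have hdrop : (p0.dropUntil u hmem).IsPath := hp0.dropUntil hmem
    have hcons : (SimpleGraph.Walk.cons hu SimpleGraph.Walk.nil).IsPath := by
      simp [SimpleGraph.Walk.isPath_def, hu.ne]
    obtain ⟨P, hP, huniq⟩ := hT.existsUnique_path u v
    have : p0.dropUntil u hmem = SimpleGraph.Walk.cons hu SimpleGraph.Walk.nil := by
      rw [huniq _ hdrop, huniq _ hcons]
    rw [SimpleGraph.Walk.concat_eq_append, ← this, SimpleGraph.Walk.take_spec]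
  · exfalso
    have hq : (p0.concat hu.symm).IsPath := by
      rw [← SimpleGraph.Walk.isPath_reverse_iff, SimpleGraph.Walk.reverse_concat]
      exact hp0.reverse.cons (by simpa using hmem)
    have h1 : (p0.concat hu.symm).length = G.dist r u := path_length_eq_dist_aux hT _ hq
    rw [SimpleGraph.Walk.length_concat, path_length_eq_dist_aux hT p0 hp0] at h1
    omega

lemma tree_key_aux (hT : G.IsTree) {r v u w : V} (hu : G.Adj u v) (hw : G.Adj w v)
    (hdu : G.dist r u ≤ G.dist r v) (hdw : G.dist r w ≤ G.dist r v) : u = w := by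
  obtain ⟨P, hP, -⟩ := hT.existsUnique_path r v
  obtain ⟨q, hq⟩ := tree_concat_aux hT P hP hu hdu
  obtain ⟨q', hq'⟩ := tree_concat_aux hT P hP hw hdw
  obtain ⟨hv, -⟩ := SimpleGraph.Walk.concat_inj (hq.symm.trans hq')
  exact hv

lemma tree_inj_aux [Fintype V] (G : SimpleGraph V) [DecidableRel G.Adj] (hT : G.IsTree) :
    Function.Injective (fun x : G.edgeSet → ℕ =>
      fun v : V => ∑ e : G.edgeSet, if v ∈ (e : Sym2 V) then x e else 0) := by
  intro x x' h
  by_contra hne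
  have hr : Nonempty V := hT.isConnected.nonempty
  obtain ⟨r⟩ := hr
  set D : G.edgeSet → ℕ := fun e =>
    Sym2.lift ⟨fun a b => max (G.dist r a) (G.dist r b), fun a b => by simp [max_comm]⟩ e.1 with hD
  set S : Finset G.edgeSet := Finset.univ.filter (fun e => x e ≠ x' e) with hS
  have hSne : S.Nonempty := by
    by_contra hcon
    rw [Finset.not_nonempty_iff_eq_empty] at hcon
    apply hne
    funext e
    by_contra hxe
    have : e ∈ S := by simp [hS, hxe]
    simp [hcon] at this
  obtain ⟨e0, he0S, he0max⟩ := Finset.exists_max_image S D hSne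
  have he0 : x e0 ≠ x' e0 := by simpa [hS] using he0S
  suffices haux : ∀ a b : V, s(a, b) = e0.1 → G.dist r a ≤ G.dist r b → False by
    obtain ⟨⟨a, b⟩, hab⟩ := Quot.exists_rep e0.1
    rcases le_total (G.dist r a) (G.dist r b) with hd | hd
    · exact haux a b hab hd
    · exact haux b a (by rw [← hab]; exact Sym2.eq_swap) hd
  intro a b hab hd
  have hAdjab : G.Adj a b := by rw [← SimpleGraph.mem_edgeSet, hab]; exact e0.2
  have hbmem : b ∈ e0.1 := by rw [← hab]; exact Sym2.mem_mk_right a b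
  have hDe0 : D e0 = G.dist r b := by
    rw [hD]; simp only [← hab, Sym2.lift_mk]
    exact max_eq_right hd
  have hclaim : ∃ e1, e1 ∈ S ∧ e1 ≠ e0 ∧ b ∈ e1.1 := by
    by_contra hno
    push_neg at hno
    have hsum : ∑ e : G.edgeSet, (if b ∈ (e : Sym2 V) then x e else 0)
        = ∑ e : G.edgeSet, (if b ∈ (e : Sym2 V) then x' e else 0) := congrFun h b
    rw [← Finset.add_sum_erase _ _ (Finset.mem_univ e0),
        ← Finset.add_sum_erase _ _ (Finset.mem_univ e0)] at hsum
    have htail : ∑ e ∈ Finset.univ.erase e0, (if b ∈ (e : Sym2 V) then x e else 0)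
        = ∑ e ∈ Finset.univ.erase e0, (if b ∈ (e : Sym2 V) then x' e else 0) := by
      refine Finset.sum_congr rfl fun e he => ?_
      by_cases hbe : b ∈ (e : Sym2 V)
      · simp only [if_pos hbe]
        by_contra hxx
        have heS : e ∈ S := by simp [hS, hxx]
        exact (hno e heS (Finset.ne_of_mem_erase he)) hbe
      · simp [hbe]
    rw [htail] at hsum
    have := Nat.add_right_cancel hsum
    rw [if_pos hbmem, if_pos hbmem] at this
    exact he0 this
  obtain ⟨e1, he1S, he1ne, hbe1⟩ := hclaim
  obtain ⟨c, hc⟩ := (Sym2.mem_iff_exists).1 hbe1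
  have hAdjbc : G.Adj b c := by rw [← SimpleGraph.mem_edgeSet, ← hc]; exact e1.2
  have hDe1 : D e1 ≤ G.dist r b := by rw [← hDe0]; exact he0max e1 he1S
  have hdc : G.dist r c ≤ G.dist r b := by
    rw [hD] at hDe1
    simp only [hc, Sym2.lift_mk] at hDe1
    exact le_trans (le_max_right _ _) hDe1
  have hac : a = c := tree_key_aux hT hAdjab hAdjbc.symm hd hdc
  apply he1ne
  apply Subtype.ext
  rw [hc, ← hab, ← hac, Sym2.eq_swap]

end Tree

/-! ### Auxiliary lemma: summing over an injective family -/

lemma sum_le_pow_aux {α W : Type*} [Fintype W] {g : ℕ → ℝ} (hgnn : ∀ n, 0 ≤ g n)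
    (hgsum : Summable g) (Φ : α → W → ℕ) (hΦ : Function.Injective Φ) :
    Summable (fun x : α => ∏ v : W, g (Φ x v)) ∧
      (∑' x : α, ∏ v : W, g (Φ x v)) ≤ (∑' n : ℕ, g n) ^ Fintype.card W := by
  classical
  have hFnn : ∀ x : α, 0 ≤ ∏ v : W, g (Φ x v) := fun x =>
    Finset.prod_nonneg fun v _ => hgnn _
  have key : ∀ s : Finset α, ∑ x ∈ s, ∏ v : W, g (Φ x v) ≤ (∑' n : ℕ, g n) ^ Fintype.card W := by
    intro s
    have hinj : ∀ x ∈ s, ∀ y ∈ s, Φ x = Φ y → x = y := fun x _ y _ hxy => hΦ hxy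
    rw [show ∑ x ∈ s, ∏ v : W, g (Φ x v) = ∑ y ∈ s.image Φ, ∏ v : W, g (y v) from
      (Finset.sum_image (f := fun y : W → ℕ => ∏ v : W, g (y v)) hinj).symm]
    set M := ((s.image Φ).sup fun y => Finset.univ.sup y) + 1 with hM
    have hsub : s.image Φ ⊆ Fintype.piFinset fun _ : W => Finset.range M := by
      intro y hy
      rw [Fintype.mem_piFinset]
      intro v
      rw [Finset.mem_range, hM]
      have h1 : y v ≤ Finset.univ.sup y := Finset.le_sup (Finset.mem_univ v)
      have h2 : Finset.univ.sup y ≤ (s.image Φ).sup fun y => Finset.univ.sup y :=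
        Finset.le_sup hy
      omega
    calc ∑ y ∈ s.image Φ, ∏ v : W, g (y v)
        ≤ ∑ y ∈ Fintype.piFinset (fun _ : W => Finset.range M), ∏ v : W, g (y v) :=
          Finset.sum_le_sum_of_subset_of_nonneg hsub
            (fun y _ _ => Finset.prod_nonneg fun v _ => hgnn _)
      _ = ∏ _v : W, ∑ n ∈ Finset.range M, g n := (Finset.prod_univ_sum _ _).symm
      _ ≤ ∏ _v : W, ∑' n : ℕ, g n := by
          refine Finset.prod_le_prod (fun _ _ => Finset.sum_nonneg fun n _ => hgnn n)
            (fun _ _ => Summable.sum_le_tsum _ (fun n _ => hgnn n) hgsum)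
      _ = (∑' n : ℕ, g n) ^ Fintype.card W := by
          rw [Finset.prod_const, Finset.card_univ]
  have hsummable : Summable (fun x : α => ∏ v : W, g (Φ x v)) :=
    summable_of_sum_le hFnn key
  exact ⟨hsummable, Summable.tsum_le_of_sum_le hsummable key⟩

/-- For a finite tree `G` and `0 < t ≤ 1/4`, the family of products of Catalan terms
indexed by edge-weight functions is summable, and its sum is bounded by
`(∑ₙ Catₙ tⁿ)^{|V|}`. -/
theorem stmt_2 {V : Type*} [Fintype V] [DecidableEq V] (G : SimpleGraph V)
    [DecidableRel G.Adj] (hT : G.IsTree) (t : ℝ) (ht0 : 0 < t) (ht : t ≤ 1 / 4) :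
    Summable (fun x : G.edgeSet → ℕ =>
      ∏ v : V,
        (catalan (∑ e : G.edgeSet, if v ∈ (e : Sym2 V) then x e else 0) : ℝ) *
          t ^ (∑ e : G.edgeSet, if v ∈ (e : Sym2 V) then x e else 0)) ∧
    (∑' x : G.edgeSet → ℕ,
      ∏ v : V,
        (catalan (∑ e : G.edgeSet, if v ∈ (e : Sym2 V) then x e else 0) : ℝ) *
          t ^ (∑ e : G.edgeSet, if v ∈ (e : Sym2 V) then x e else 0)) ≤
      (∑' n : ℕ, (catalan n : ℝ) * t ^ n) ^ (Fintype.card V) := by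
  have hgnn : ∀ n : ℕ, 0 ≤ (catalan n : ℝ) * t ^ n := fun n => by positivity
  have hgsum : Summable (fun n => (catalan n : ℝ) * t ^ n) := summable_catalan_aux ht0 ht
  exact sum_le_pow_aux hgnn hgsum
    (fun x : G.edgeSet → ℕ => fun v : V => ∑ e : G.edgeSet, if v ∈ (e : Sym2 V) then x e else 0)
    (tree_inj_aux G hT)
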